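/- arXiv:2406.06876 — 2 statements merged into one kernel-verified Lean document; each statement's English description precedes it below -/
import Mathlib

section
/- If there is no Type A line, then h_Φ = m/2. Otherwise, max{ h_L : L a Type A line } = h_Φ. -/
open MeasureTheory
open scoped ENNReal

namespace Paper

noncomputable def pev (Φ : MvPolynomial (Fin 2) ℝ) (x : ℝ × ℝ) : ℝ :=
  MvPolynomial.eval ![x.1, x.2] Φ

noncomputable def Hpoly (Φ : MvPolynomial (Fin 2) ℝ) : MvPolynomial (Fin 2) ℝ :=
  MvPolynomial.pderiv 0 (MvPolynomial.pderiv 0 Φ) * MvPolynomial.pderiv 1 (MvPolynomial.pderiv 1 Φ)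
    - MvPolynomial.pderiv 0 (MvPolynomial.pderiv 1 Φ) ^ 2

noncomputable def weight (Φ : MvPolynomial (Fin 2) ℝ) (x : ℝ × ℝ) : ℝ :=
  Real.sqrt (1 + pev (MvPolynomial.pderiv 0 Φ) x ^ 2 + pev (MvPolynomial.pderiv 1 Φ) x ^ 2)

noncomputable def angle2 (x v : ℝ × ℝ) : ℝ :=
  Real.arccos ((x.1 * v.1 + x.2 * v.2)
    / (Real.sqrt (x.1 ^ 2 + x.2 ^ 2) * Real.sqrt (v.1 ^ 2 + v.2 ^ 2)))

def cone (ε lam : ℝ) : Set (ℝ × ℝ) :=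
  {x | x ≠ 0 ∧ (angle2 x (1, lam) < ε ∨ angle2 x (-1, -lam) < ε)}

def euclBall : Set (ℝ × ℝ) := {x | x.1 ^ 2 + x.2 ^ 2 < 1}

noncomputable def MlocSet (Φ : MvPolynomial (Fin 2) ℝ) (c : ℝ) (Ω : Set (ℝ × ℝ))
    (f : (Fin 3 → ℝ) → ℝ) (y : Fin 3 → ℝ) : ℝ :=
  ⨆ t : Set.Icc (1 : ℝ) 2,
    |∫ x in Ω, f (y - (t : ℝ) • ![x.1, x.2, pev Φ x + c]) * weight Φ x|

noncomputable def MlocEta (Φ : MvPolynomial (Fin 2) ℝ) (c : ℝ) (η : ℝ × ℝ → ℝ)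
    (f : (Fin 3 → ℝ) → ℝ) (y : Fin 3 → ℝ) : ℝ :=
  ⨆ t : Set.Icc (1 : ℝ) 2,
    |∫ x : ℝ × ℝ, f (y - (t : ℝ) • ![x.1, x.2, pev Φ x + c]) * η x * weight Φ x|

noncomputable def MglobEta (Φ : MvPolynomial (Fin 2) ℝ) (c : ℝ) (η : ℝ × ℝ → ℝ)
    (f : (Fin 3 → ℝ) → ℝ) (y : Fin 3 → ℝ) : ℝ :=
  ⨆ t : Set.Ioi (0 : ℝ),
    |∫ x : ℝ × ℝ, f (y - (t : ℝ) • ![x.1, x.2, pev Φ x + c]) * η x * weight Φ x|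

def BddLpLq (T : ((Fin 3 → ℝ) → ℝ) → (Fin 3 → ℝ) → ℝ) (p q : ℝ≥0∞) : Prop :=
  ∃ C : ℝ≥0∞, ∀ f : (Fin 3 → ℝ) → ℝ, MemLp f p volume →
    eLpNorm (T f) q volume ≤ C * eLpNorm f p volume

def Delta0 : Set (ℝ × ℝ) :=
  {v | v.1 / 3 < v.2 ∧ v.2 < v.1 ∧ v.1 < 2 / 3 ∧ 2 * v.1 - 1 < v.2}
    ∪ {v | v.1 = v.2 ∧ 0 ≤ v.1 ∧ v.1 < 2 / 3}

noncomputable def linForm (lam : ℝ) : MvPolynomial (Fin 2) ℝ :=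
  MvPolynomial.X 1 - MvPolynomial.C lam * MvPolynomial.X 0

def TypeA (Φ : MvPolynomial (Fin 2) ℝ) (lam : ℝ) : Prop :=
  (∀ x₁ : ℝ, MvPolynomial.eval ![x₁, lam * x₁] (Hpoly Φ) = 0) ∧
  (∀ x₁ : ℝ, x₁ ≠ 0 → MvPolynomial.eval ![x₁, lam * x₁] Φ = 0)

def TypeB (Φ : MvPolynomial (Fin 2) ℝ) (lam : ℝ) : Prop :=
  (∀ x₁ : ℝ, MvPolynomial.eval ![x₁, lam * x₁] (Hpoly Φ) = 0) ∧
  MvPolynomial.eval ![1, lam] Φ ≠ 0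

noncomputable def vertP2 (M : ℕ) : ℝ × ℝ :=
  (((M : ℝ) + 1) / (2 * M), ((M : ℝ) + 1) / (2 * M))

noncomputable def deltaVertices (M : ℕ) : Set (ℝ × ℝ) :=
  if 6 ≤ M then
    {(0, 0), vertP2 M, (4 / ((M : ℝ) + 2), 2 / ((M : ℝ) + 2)),
      (3 / ((M : ℝ) + 2), 1 / ((M : ℝ) + 2))}
  else if M = 5 then
    {(0, 0), vertP2 M,
      ((2 * (M : ℝ) + 4) / (5 * (M : ℝ) + 2), ((M : ℝ) + 2) / (5 * (M : ℝ) + 2)),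
      (1 / 2, ((M : ℝ) - 2) / (2 * ((M : ℝ) + 2))),
      (3 / ((M : ℝ) + 2), 1 / ((M : ℝ) + 2))}
  else if M = 4 then
    {(0, 0), vertP2 M,
      ((2 * (M : ℝ) + 4) / (5 * (M : ℝ) + 2), ((M : ℝ) + 2) / (5 * (M : ℝ) + 2)),
      (3 / ((M : ℝ) + 2), 1 / ((M : ℝ) + 2))}
  else
    {(0, 0), vertP2 M,
      ((2 * (M : ℝ) + 4) / (5 * (M : ℝ) + 2), ((M : ℝ) + 2) / (5 * (M : ℝ) + 2)),
      ((3 * (M : ℝ) + 6) / (8 * (M : ℝ) + 4), ((M : ℝ) + 2) / (8 * (M : ℝ) + 4))}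

noncomputable def DeltaM (M : ℕ) : Set (ℝ × ℝ) :=
  interior (convexHull ℝ (deltaVertices M))
    ∪ {v | ∃ θ : ℝ, 0 ≤ θ ∧ θ < 1 ∧ v = θ • vertP2 M}

noncomputable def pd (i : Fin 2) : MvPolynomial (Fin 2) ℝ → MvPolynomial (Fin 2) ℝ :=
  fun p => MvPolynomial.pderiv i p

noncomputable def orddAt (Φ : MvPolynomial (Fin 2) ℝ) (x : ℝ × ℝ) : ℕ :=
  sInf {j : ℕ | ∃ a b : ℕ, a + b = j ∧
    MvPolynomial.eval ![x.1, x.2] ((pd 0)^[a] ((pd 1)^[b] Φ)) ≠ 0}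

noncomputable def ordd (Φ : MvPolynomial (Fin 2) ℝ) : ℕ :=
  sSup {n : ℕ | ∃ x : ℝ × ℝ, x.1 ^ 2 + x.2 ^ 2 = 1 ∧ orddAt Φ x = n}

noncomputable def heightPhi (Φ : MvPolynomial (Fin 2) ℝ) (m : ℕ) : ℝ :=
  max ((m : ℝ) / 2) (ordd Φ)

def lineSet : Option ℝ → Set (ℝ × ℝ)
  | some l => {x | x.2 = l * x.1}
  | none => {x | x.1 = 0}

noncomputable def lineForm : Option ℝ → MvPolynomial (Fin 2) ℝ
  | some l => MvPolynomial.X 1 - MvPolynomial.C l * MvPolynomial.X 0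
  | none => MvPolynomial.X 0

def basePt : Option ℝ → ℝ × ℝ
  | some l => (1, l)
  | none => (0, 1)

def IsTypeALine (Φ : MvPolynomial (Fin 2) ℝ) (o : Option ℝ) : Prop :=
  (∀ x ∈ lineSet o, pev (Hpoly Φ) x = 0) ∧
  (∀ x ∈ lineSet o, x ≠ 0 → pev Φ x = 0)

def IsTypeBLine (Φ : MvPolynomial (Fin 2) ℝ) (o : Option ℝ) : Prop :=
  (∀ x ∈ lineSet o, pev (Hpoly Φ) x = 0) ∧
  (∀ x ∈ lineSet o, x ≠ 0 → pev Φ x ≠ 0)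

noncomputable def MPhi (Φ : MvPolynomial (Fin 2) ℝ) : ℕ :=
  sSup {n : ℕ | ∃ o : Option ℝ, IsTypeBLine Φ o ∧
    ∃ ω : ℕ, ∃ Q : MvPolynomial (Fin 2) ℝ,
      Hpoly Φ = lineForm o ^ ω * Q ∧ pev Q (basePt o) ≠ 0 ∧ n = ω + 2}

end Paper

open Paper

namespace Aux
open MvPolynomial Paper

abbrev MP := MvPolynomial (Fin 2) ℝ

lemma basePt_mem (o : Option ℝ) : basePt o ∈ lineSet o := by
  cases o <;> simp [basePt, lineSet]

lemma basePt_ne_zero (o : Option ℝ) : basePt o ≠ 0 := by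
  cases o <;> simp [basePt, Prod.ext_iff]

lemma mem_lineSet_iff {o : Option ℝ} {x : ℝ × ℝ} :
    x ∈ lineSet o ↔ ∃ s : ℝ, x = s • basePt o := by
  cases o with
  | none =>
    constructor
    · intro hx
      refine ⟨x.2, ?_⟩
      have : x.1 = 0 := hx
      ext <;> simp [basePt, this]
    · rintro ⟨s, rfl⟩; simp [lineSet, basePt]
  | some l =>
    constructor
    · intro hx
      refine ⟨x.1, ?_⟩
      have : x.2 = l * x.1 := hx
      ext <;> simp [basePt, this, mul_comm]
    · rintro ⟨s, rfl⟩; simp [lineSet, basePt, mul_comm]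

lemma mem_lineSet_ne {o : Option ℝ} {x : ℝ × ℝ} (hx : x ∈ lineSet o) (h0 : x ≠ 0) :
    ∃ s : ℝ, s ≠ 0 ∧ x = s • basePt o := by
  obtain ⟨s, rfl⟩ := mem_lineSet_iff.mp hx
  exact ⟨s, fun h => h0 (by simp [h]), rfl⟩

lemma pev_lineForm_eq_zero {o : Option ℝ} {x : ℝ × ℝ} (hx : x ∈ lineSet o) :
    pev (lineForm o) x = 0 := by
  cases o with
  | none =>
    have : x.1 = 0 := hx
    simp [pev, lineForm, this]
  | some l =>
    have : x.2 = l * x.1 := hx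
    simp [pev, lineForm, this]

lemma lineForm_isHomogeneous (o : Option ℝ) : (lineForm o).IsHomogeneous 1 := by
  cases o with
  | none => simpa [lineForm] using isHomogeneous_X ℝ (0 : Fin 2)
  | some l =>
    exact (isHomogeneous_X ℝ (1 : Fin 2)).sub (isHomogeneous_C_mul_X l (0 : Fin 2))

lemma lineForm_ne_zero (o : Option ℝ) : lineForm o ≠ 0 := by
  intro h
  cases o with
  | none => exact MvPolynomial.X_ne_zero (0 : Fin 2) h
  | some l =>
    have := congrArg (eval ![(0:ℝ), 1]) h
    simp [lineForm] at this

lemma pev_mul (p q : MP) (x : ℝ × ℝ) : pev (p * q) x = pev p x * pev q x := by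
  simp [pev]

lemma pev_pow (p : MP) (n : ℕ) (x : ℝ × ℝ) : pev (p ^ n) x = pev p x ^ n := by
  simp [pev]

lemma lineForm_not_isUnit (o : Option ℝ) : ¬ IsUnit (lineForm o) := by
  intro h
  obtain ⟨v, hv⟩ := isUnit_iff_exists_inv.mp h
  have h2 : pev (lineForm o * v) (basePt o) = pev 1 (basePt o) := by rw [hv]
  rw [pev_mul, pev_lineForm_eq_zero (basePt_mem o), zero_mul] at h2
  simp [pev] at h2

lemma eval_homog_smul {P : MP} {n : ℕ} (hP : P.IsHomogeneous n) (s : ℝ) (v : Fin 2 → ℝ) :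
    eval (fun i => s * v i) P = s ^ n * eval v P := by
  rw [eval_eq', eval_eq', Finset.mul_sum]
  apply Finset.sum_congr rfl
  intro d hd
  have hd' : coeff d P ≠ 0 := mem_support_iff.mp hd
  have hdeg : ∑ i, d i = n := by
    have h1 := hP hd'
    have h2 : (Finsupp.weight 1) d = ∑ i ∈ d.support, d i := by
      simp [Finsupp.weight_apply, Finsupp.sum]
    have h3 : ∑ i ∈ d.support, d i = ∑ i : Fin 2, d i := by
      apply Finset.sum_subset (Finset.subset_univ _)
      intro i _ hi
      simpa using Finsupp.notMem_support_iff.mp hi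
    rw [← h3, ← h2, h1]
  simp_rw [mul_pow]
  rw [Finset.prod_mul_distrib, Finset.prod_pow_eq_pow_sum, hdeg]
  ring

lemma pev_homog_smul {P : MP} {n : ℕ} (hP : P.IsHomogeneous n) (s : ℝ) (x : ℝ × ℝ) :
    pev P (s • x) = s ^ n * pev P x := by
  have hv : ![(s • x).1, (s • x).2] = fun i => s * ![x.1, x.2] i := by
    funext i; fin_cases i <;> simp
  rw [pev, pev, hv, eval_homog_smul hP]

end Aux
namespace Aux
open MvPolynomial Paper

noncomputable def subMap (o : Option ℝ) : Fin 2 → MP :=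
  match o with
  | some l => ![X 0, C l * X 0]
  | none => ![0, X 1]

lemma lineForm_dvd_X_sub (o : Option ℝ) (i : Fin 2) : lineForm o ∣ X i - subMap o i := by
  cases o with
  | none =>
    fin_cases i
    · simpa [subMap, lineForm] using dvd_refl (X (0 : Fin 2) : MP)
    · simp [subMap, lineForm]
  | some l =>
    fin_cases i
    · simp [subMap, lineForm]
    · simpa [subMap, lineForm] using dvd_refl (lineForm (some l))

lemma lineForm_dvd_sub_aeval (o : Option ℝ) (Q : MP) :
    lineForm o ∣ Q - aeval (subMap o) Q := by
  induction Q using MvPolynomial.induction_on with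
  | C a => simp
  | add p q hp hq =>
    have h := dvd_add hp hq
    have : p + q - aeval (subMap o) (p + q)
        = (p - aeval (subMap o) p) + (q - aeval (subMap o) q) := by
      rw [map_add]; ring
    rwa [this]
  | mul_X p i hp =>
    have h1 := lineForm_dvd_X_sub o i
    have : p * X i - aeval (subMap o) (p * X i)
        = (p - aeval (subMap o) p) * X i + aeval (subMap o) p * (X i - subMap o i) := by
      rw [map_mul, aeval_X]; ring
    rw [this]
    exact dvd_add (hp.mul_right _) (h1.mul_left _)

lemma aeval_subMap_eq_zero {o : Option ℝ} {Q : MP} (h : ∀ x ∈ lineSet o, pev Q x = 0) :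
    aeval (subMap o) Q = 0 := by
  apply MvPolynomial.funext
  intro v
  rw [map_zero]
  rw [aeval_def, eval_eval₂]
  have hid : (eval v).comp (algebraMap ℝ MP) = RingHom.id ℝ := by
    ext r; simp
  rw [hid, eval₂_id]
  cases o with
  | some l =>
    have hpt : ((v 0, l * v 0) : ℝ × ℝ) ∈ lineSet (some l) := rfl
    have hz := h _ hpt
    rw [pev] at hz
    have hfun : (fun s => eval v (subMap (some l) s)) = ![(v 0 : ℝ), l * v 0] := by
      funext i; fin_cases i <;> simp [subMap]
    rw [hfun]
    simpa using hz
  | none =>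
    have hpt : ((0, v 1) : ℝ × ℝ) ∈ lineSet none := rfl
    have hz := h _ hpt
    rw [pev] at hz
    have hfun : (fun s => eval v (subMap none s)) = ![(0 : ℝ), v 1] := by
      funext i; fin_cases i <;> simp [subMap]
    rw [hfun]
    simpa using hz

lemma lineForm_dvd_of_vanish {o : Option ℝ} {Q : MP} (h : ∀ x ∈ lineSet o, pev Q x = 0) :
    lineForm o ∣ Q := by
  have h2 := lineForm_dvd_sub_aeval o Q
  rwa [aeval_subMap_eq_zero h, sub_zero] at h2

lemma pev_ne_zero_on_line {o : Option ℝ} {P : MP} {e : ℕ} (hP : P.IsHomogeneous e)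
    (hnd : ¬ lineForm o ∣ P) {x : ℝ × ℝ} (hx : x ∈ lineSet o) (h0 : x ≠ 0) :
    pev P x ≠ 0 := by
  intro hzero
  obtain ⟨s, hs, rfl⟩ := mem_lineSet_ne hx h0
  have hb : pev P (basePt o) = 0 := by
    have h1 : pev P (s • basePt o) = s ^ e * pev P (basePt o) := pev_homog_smul hP s _
    rw [hzero] at h1
    have := (mul_eq_zero.mp h1.symm).resolve_left (pow_ne_zero e hs)
    exact this
  apply hnd
  apply lineForm_dvd_of_vanish
  intro y hy
  obtain ⟨t, rfl⟩ := mem_lineSet_iff.mp hy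
  rw [pev_homog_smul hP, hb, mul_zero]

lemma isHomog_of_lineForm_mul {o : Option ℝ} {P : MP} {d : ℕ}
    (h : (lineForm o * P).IsHomogeneous d) (hP : P ≠ 0) :
    ∃ e, d = e + 1 ∧ P.IsHomogeneous e := by
  have hl := lineForm_isHomogeneous o
  have key : ∀ k : ℕ, k + 1 ≠ d → homogeneousComponent k P = 0 := by
    intro k hk
    have h1 : homogeneousComponent (k + 1) (lineForm o * P) = 0 := by
      rw [homogeneousComponent_of_mem h, if_neg hk]
    have h2 : homogeneousComponent (k + 1) (lineForm o * P)
        = lineForm o * homogeneousComponent k P := by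
      conv_lhs => rw [← sum_homogeneousComponent P, Finset.mul_sum, map_sum]
      have hterm : ∀ i ∈ Finset.range (P.totalDegree + 1),
          homogeneousComponent (k + 1) (lineForm o * homogeneousComponent i P)
            = if k = i then lineForm o * homogeneousComponent i P else 0 := by
        intro i _
        have hhi : (lineForm o * homogeneousComponent i P).IsHomogeneous (1 + i) :=
          hl.mul (homogeneousComponent_isHomogeneous i P)
        rw [homogeneousComponent_of_mem hhi]
        exact if_congr (by omega) rfl rfl
      rw [Finset.sum_congr rfl hterm, Finset.sum_ite_eq]
      by_cases hk2 : k ∈ Finset.range (P.totalDegree + 1)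
      · rw [if_pos hk2]
      · rw [if_neg hk2]
        have hz : homogeneousComponent k P = 0 :=
          homogeneousComponent_eq_zero _ P (show P.totalDegree < k by simp at hk2; omega)
        rw [hz, mul_zero]
    rw [h1] at h2
    exact (mul_eq_zero.mp h2.symm).resolve_left (lineForm_ne_zero o)
  rcases Nat.eq_zero_or_pos d with hd | hd
  · exfalso
    apply hP
    rw [← sum_homogeneousComponent P]
    apply Finset.sum_eq_zero
    intro k _
    exact key k (by omega)
  · obtain ⟨e, rfl⟩ : ∃ e, d = e + 1 := ⟨d - 1, by omega⟩
    have hPe : P = homogeneousComponent e P := by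
      conv_lhs => rw [← sum_homogeneousComponent P]
      rw [Finset.sum_eq_single e]
      · intro b _ hb; exact key b (by omega)
      · intro he
        exact homogeneousComponent_eq_zero _ P (show P.totalDegree < e by simp at he; omega)
    rw [hPe]
    exact ⟨e, rfl, homogeneousComponent_isHomogeneous e P⟩

lemma isHomog_of_lineForm_pow_mul {o : Option ℝ} :
    ∀ (k : ℕ) {P : MP} {d : ℕ},
      ((lineForm o) ^ k * P).IsHomogeneous d → P ≠ 0 → ∃ e, d = e + k ∧ P.IsHomogeneous e := by
  intro k
  induction k with
  | zero => intro P d h hP; exact ⟨d, by omega, by simpa using h⟩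
  | succ k ih =>
    intro P d h hP
    have h' : ((lineForm o) ^ k * (lineForm o * P)).IsHomogeneous d := by
      rwa [← mul_assoc, ← pow_succ]
    obtain ⟨e', hd, he'⟩ := ih h' (mul_ne_zero (lineForm_ne_zero o) hP)
    obtain ⟨e, he, hPh⟩ := isHomog_of_lineForm_mul he' hP
    exact ⟨e, by omega, hPh⟩

lemma exists_max_factor (o : Option ℝ) {Φ : MP} (hΦ : Φ ≠ 0) :
    ∃ k Q, Φ = lineForm o ^ k * Q ∧ ¬ lineForm o ∣ Q := by
  have hfin : FiniteMultiplicity (lineForm o) Φ :=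
    FiniteMultiplicity.of_not_isUnit (lineForm_not_isUnit o) hΦ
  obtain ⟨Q, hQ⟩ := pow_multiplicity_dvd (lineForm o) Φ
  set k := multiplicity (lineForm o) Φ with hk
  refine ⟨k, Q, hQ, fun hdvd => ?_⟩
  obtain ⟨R, hR⟩ := hdvd
  have hdd : lineForm o ^ (k + 1) ∣ Φ :=
    ⟨R, by rw [hQ, hR]; ring⟩
  exact hfin.not_pow_dvd_of_multiplicity_lt (Nat.lt_succ_self _) hdd

end Aux
namespace Aux
open MvPolynomial Paper

lemma pd_lineForm_exists (o : Option ℝ) (i : Fin 2) :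
    ∃ c : ℝ, pd i (lineForm o) = C c := by
  cases o with
  | none =>
    fin_cases i
    · exact ⟨1, by simp [pd, lineForm]⟩
    · exact ⟨0, by simp [pd, lineForm, pderiv_X_of_ne]⟩
  | some l =>
    fin_cases i
    · refine ⟨-l, ?_⟩
      simp [pd, lineForm, pderiv_X_of_ne, pderiv_C_mul, map_sub]
    · refine ⟨1, ?_⟩
      simp [pd, lineForm, pderiv_X_of_ne, pderiv_C_mul, map_sub]

lemma pd_lineForm_tdir :
    ∀ o : Option ℝ, (o.isSome → pd 1 (lineForm o) = 1) ∧ (o.isNone → pd 0 (lineForm o) = 1) := by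
  intro o
  cases o with
  | none => exact ⟨by simp, fun _ => by simp [pd, lineForm]⟩
  | some l =>
    refine ⟨fun _ => ?_, by simp⟩
    simp [pd, lineForm, pderiv_X_of_ne, pderiv_C_mul, map_sub]

lemma pd_pow_mul {i : Fin 2} {l : MP} {c : ℝ} (hc : pd i l = C c) (k : ℕ) (A : MP) :
    pd i (l ^ (k + 1) * A) = l ^ k * (((k + 1 : ℕ) : MP) * C c * A + l * pd i A) := by
  simp only [pd] at hc ⊢
  rw [pderiv_mul, pderiv_pow, hc]
  simp only [Nat.add_sub_cancel]
  push_cast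
  ring

lemma iter_pd_pow_mul {i : Fin 2} {l : MP} {c : ℝ} (hc : pd i l = C c) :
    ∀ (j k : ℕ), j ≤ k → ∀ A : MP, ∃ B, (pd i)^[j] (l ^ k * A) = l ^ (k - j) * B := by
  intro j
  induction j with
  | zero => intro k _ A; exact ⟨A, by simp⟩
  | succ j ih =>
    intro k hk A
    obtain ⟨k', rfl⟩ : ∃ k', k = k' + 1 := ⟨k - 1, by omega⟩
    rw [Function.iterate_succ_apply, pd_pow_mul hc]
    obtain ⟨B, hB⟩ := ih k' (by omega) _
    refine ⟨B, ?_⟩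
    rw [hB]
    congr 2
    omega

lemma iter_pd_top {i : Fin 2} {l : MP} (hc : pd i l = 1) :
    ∀ (n : ℕ) (A : MP), ∃ B, (pd i)^[n] (l ^ n * A) = C (n.factorial : ℝ) * A + l * B := by
  intro n
  induction n with
  | zero => intro A; exact ⟨0, by simp⟩
  | succ n ih =>
    intro A
    have hc' : pd i l = C 1 := by rw [hc, map_one]
    rw [Function.iterate_succ_apply, pd_pow_mul hc']
    obtain ⟨B, hB⟩ := ih (((n + 1 : ℕ) : MP) * C 1 * A + l * pd i A)
    refine ⟨C (n.factorial : ℝ) * pd i A + B, ?_⟩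
    rw [hB]
    have h1 : ((n + 1 : ℕ) : MP) = C ((n + 1 : ℕ) : ℝ) := by
      push_cast
      simp [map_add]
    have h2 : ((n + 1).factorial : ℝ) = ((n + 1 : ℕ) : ℝ) * (n.factorial : ℝ) := by
      rw [Nat.factorial_succ]; push_cast; ring
    rw [h1, h2, map_mul]
    simp only [map_one, mul_one]
    ring

lemma orddAt_eq {o : Option ℝ} {Φ P : MP} {n : ℕ}
    (hfac : Φ = lineForm o ^ n * P)
    {x : ℝ × ℝ} (hx : x ∈ lineSet o) (h0 : x ≠ 0) (hPx : pev P x ≠ 0) :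
    orddAt Φ x = n := by
  have hlx : eval ![x.1, x.2] (lineForm o) = 0 := pev_lineForm_eq_zero hx
  have hmem : n ∈ {j : ℕ | ∃ a b : ℕ, a + b = j ∧
      eval ![x.1, x.2] ((pd 0)^[a] ((pd 1)^[b] Φ)) ≠ 0} := by
    cases o with
    | some l =>
      refine ⟨0, n, by omega, ?_⟩
      obtain ⟨B, hB⟩ := iter_pd_top ((pd_lineForm_tdir (some l)).1 rfl) n P
      rw [hfac, Function.iterate_zero, id, hB]
      rw [map_add, map_mul, map_mul, eval_C, hlx, zero_mul, add_zero]
      exact mul_ne_zero (by positivity) hPx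
    | none =>
      refine ⟨n, 0, by omega, ?_⟩
      obtain ⟨B, hB⟩ := iter_pd_top ((pd_lineForm_tdir none).2 rfl) n P
      rw [hfac, Function.iterate_zero, id, hB]
      rw [map_add, map_mul, map_mul, eval_C, hlx, zero_mul, add_zero]
      exact mul_ne_zero (by positivity) hPx
  have hnot : ∀ j, j < n → j ∉ {j : ℕ | ∃ a b : ℕ, a + b = j ∧
      eval ![x.1, x.2] ((pd 0)^[a] ((pd 1)^[b] Φ)) ≠ 0} := by
    rintro j hj ⟨a, b, hab, hne⟩
    obtain ⟨c1, hc1⟩ := pd_lineForm_exists o 1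
    obtain ⟨c0, hc0⟩ := pd_lineForm_exists o 0
    obtain ⟨B, hB⟩ := iter_pd_pow_mul hc1 b n (by omega) P
    obtain ⟨B', hB'⟩ := iter_pd_pow_mul hc0 a (n - b) (by omega) B
    apply hne
    rw [hfac, hB, hB', map_mul, map_pow, hlx]
    rw [zero_pow (by omega : n - b - a ≠ 0), zero_mul]
  have hSne : {j : ℕ | ∃ a b : ℕ, a + b = j ∧
      eval ![x.1, x.2] ((pd 0)^[a] ((pd 1)^[b] Φ)) ≠ 0}.Nonempty := ⟨n, hmem⟩
  have hle : orddAt Φ x ≤ n := Nat.sInf_le hmem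
  have hge : ¬ orddAt Φ x < n := fun hlt => hnot _ hlt (Nat.sInf_mem hSne)
  omega

lemma dvd_helper {R : Type*} [CommRing R] (l a u b v c w : R) (h : a * b = c ^ 2) :
    l ∣ ((a + l * u) * (b + l * v) - (c + l * w) ^ 2) :=
  ⟨a * v + u * b + l * u * v - 2 * c * w - l * w ^ 2, by linear_combination h⟩

lemma lineForm_dvd_Hpoly {o : Option ℝ} {Φ P : MP} {k : ℕ}
    (hfac : Φ = lineForm o ^ (k + 2) * P) : lineForm o ∣ Hpoly Φ := by
  obtain ⟨c0, hc0⟩ := pd_lineForm_exists o 0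
  obtain ⟨c1, hc1⟩ := pd_lineForm_exists o 1
  set l := lineForm o with hldef
  set T0 : MP := ((k + 1 + 1 : ℕ) : MP) * C c0 * P + l * pd 0 P with hT0
  set T1 : MP := ((k + 1 + 1 : ℕ) : MP) * C c1 * P + l * pd 1 P with hT1
  have hp0 : pd 0 Φ = l ^ (k + 1) * T0 := by rw [hfac]; exact pd_pow_mul hc0 (k + 1) P
  have hp1 : pd 1 Φ = l ^ (k + 1) * T1 := by rw [hfac]; exact pd_pow_mul hc1 (k + 1) P
  set K : MP := ((k + 1 : ℕ) : MP) * ((k + 1 + 1 : ℕ) : MP) with hK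
  have hG00 : pd 0 (pd 0 Φ) = l ^ k * (K * C c0 * C c0 * P
      + l * (((k + 1 : ℕ) : MP) * C c0 * pd 0 P + pd 0 T0)) := by
    rw [hp0, pd_pow_mul hc0 k T0, hT0, hK]
    ring
  have hG11 : pd 1 (pd 1 Φ) = l ^ k * (K * C c1 * C c1 * P
      + l * (((k + 1 : ℕ) : MP) * C c1 * pd 1 P + pd 1 T1)) := by
    rw [hp1, pd_pow_mul hc1 k T1, hT1, hK]
    ring
  have hG01 : pd 0 (pd 1 Φ) = l ^ k * (K * C c0 * C c1 * P
      + l * (((k + 1 : ℕ) : MP) * C c0 * pd 1 P + pd 0 T1)) := by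
    rw [hp1, pd_pow_mul hc0 k T1, hT1, hK]
    ring
  have hHp : Hpoly Φ = pd 0 (pd 0 Φ) * pd 1 (pd 1 Φ) - pd 0 (pd 1 Φ) ^ 2 := rfl
  have hdvd := dvd_helper l (K * C c0 * C c0 * P)
      (((k + 1 : ℕ) : MP) * C c0 * pd 0 P + pd 0 T0)
      (K * C c1 * C c1 * P)
      (((k + 1 : ℕ) : MP) * C c1 * pd 1 P + pd 1 T1)
      (K * C c0 * C c1 * P)
      (((k + 1 : ℕ) : MP) * C c0 * pd 1 P + pd 0 T1)
      (by ring)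
  obtain ⟨E, hE⟩ := hdvd
  refine ⟨l ^ k * l ^ k * E, ?_⟩
  rw [hHp, hG00, hG11, hG01]
  calc l ^ k * (K * C c0 * C c0 * P + l * (((k + 1 : ℕ) : MP) * C c0 * pd 0 P + pd 0 T0)) *
        (l ^ k * (K * C c1 * C c1 * P + l * (((k + 1 : ℕ) : MP) * C c1 * pd 1 P + pd 1 T1))) -
        (l ^ k * (K * C c0 * C c1 * P + l * (((k + 1 : ℕ) : MP) * C c0 * pd 1 P + pd 0 T1))) ^ 2
      = l ^ k * l ^ k *
        ((K * C c0 * C c0 * P + l * (((k + 1 : ℕ) : MP) * C c0 * pd 0 P + pd 0 T0)) *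
         (K * C c1 * C c1 * P + l * (((k + 1 : ℕ) : MP) * C c1 * pd 1 P + pd 1 T1)) -
         (K * C c0 * C c1 * P + l * (((k + 1 : ℕ) : MP) * C c0 * pd 1 P + pd 0 T1)) ^ 2) := by
        ring
    _ = l ^ k * l ^ k * (l * E) := by rw [hE]
    _ = l * (l ^ k * l ^ k * E) := by ring

lemma typeA_of_factor {o : Option ℝ} {Φ P : MP} {k : ℕ}
    (hfac : Φ = lineForm o ^ (k + 2) * P) : IsTypeALine Φ o := by
  constructor
  · intro x hx
    obtain ⟨W, hW⟩ := lineForm_dvd_Hpoly hfac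
    rw [hW, pev_mul, pev_lineForm_eq_zero hx, zero_mul]
  · intro x hx _
    rw [hfac, pev_mul, pev_pow, pev_lineForm_eq_zero hx]
    rw [zero_pow (by omega : k + 2 ≠ 0), zero_mul]

end Aux
namespace Aux
open MvPolynomial Paper

noncomputable def normPt (o : Option ℝ) : ℝ × ℝ :=
  (1 / Real.sqrt ((basePt o).1 ^ 2 + (basePt o).2 ^ 2)) • basePt o

lemma basePt_sq_pos (o : Option ℝ) : 0 < (basePt o).1 ^ 2 + (basePt o).2 ^ 2 := by
  cases o with
  | none => norm_num [basePt]
  | some l => simp only [basePt]; positivity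

lemma normPt_mem (o : Option ℝ) : normPt o ∈ lineSet o := mem_lineSet_iff.mpr ⟨_, rfl⟩

lemma normPt_circ (o : Option ℝ) : (normPt o).1 ^ 2 + (normPt o).2 ^ 2 = 1 := by
  have h := basePt_sq_pos o
  have hss : Real.sqrt ((basePt o).1 ^ 2 + (basePt o).2 ^ 2) ^ 2
      = (basePt o).1 ^ 2 + (basePt o).2 ^ 2 := Real.sq_sqrt h.le
  have hs : Real.sqrt ((basePt o).1 ^ 2 + (basePt o).2 ^ 2) ≠ 0 := by
    intro h0
    rw [h0] at hss
    nlinarith [hss, h]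
  simp only [normPt, Prod.smul_fst, Prod.smul_snd, smul_eq_mul]
  field_simp
  exact hss.symm

lemma circle_ne_zero {x : ℝ × ℝ} (h : x.1 ^ 2 + x.2 ^ 2 = 1) : x ≠ 0 := by
  intro h0
  rw [h0] at h
  norm_num at h

lemma normPt_ne_zero (o : Option ℝ) : normPt o ≠ 0 := circle_ne_zero (normPt_circ o)

lemma line_through {x : ℝ × ℝ} (hx : x ≠ 0) : ∃ o, x ∈ lineSet o := by
  by_cases h : x.1 = 0
  · exact ⟨none, h⟩
  · refine ⟨some (x.2 / x.1), ?_⟩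
    show x.2 = x.2 / x.1 * x.1
    field_simp

lemma point_data {Φ : MP} {m : ℕ} (hΦ : Φ ≠ 0) (hhom : Φ.IsHomogeneous m)
    {x : ℝ × ℝ} (hx : x ≠ 0) :
    ∃ (o : Option ℝ) (k : ℕ) (Q : MP), x ∈ lineSet o ∧ Φ = lineForm o ^ k * Q ∧
      ¬ lineForm o ∣ Q ∧ k ≤ m ∧ Q.IsHomogeneous (m - k) ∧ orddAt Φ x = k := by
  obtain ⟨o, hxo⟩ := line_through hx
  obtain ⟨k, Q, hfac, hnd⟩ := exists_max_factor o hΦ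
  have hQ0 : Q ≠ 0 := by rintro rfl; rw [mul_zero] at hfac; exact hΦ hfac
  obtain ⟨e, hme, hQh⟩ := isHomog_of_lineForm_pow_mul k (by rw [← hfac]; exact hhom) hQ0
  have hQx : pev Q x ≠ 0 := pev_ne_zero_on_line hQh hnd hxo hx
  refine ⟨o, k, Q, hxo, hfac, hnd, by omega, ?_, orddAt_eq hfac hxo hx hQx⟩
  rw [show m - k = e by omega]
  exact hQh

end Aux
/-- Proposition 1.4: if there is no Type A line then `h_Φ = m/2`;
otherwise `max { h_L : L a Type A line } = h_Φ`. -/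
theorem typeA_heights_eq_height
    (Φ : MvPolynomial (Fin 2) ℝ) (m : ℕ) (hm : 2 ≤ m)
    (hhom : Φ.IsHomogeneous m) (hH : Hpoly Φ ≠ 0) :
    ((¬ ∃ o : Option ℝ, IsTypeALine Φ o) → heightPhi Φ m = (m : ℝ) / 2) ∧
    ((∃ o : Option ℝ, IsTypeALine Φ o) →
      IsGreatest
        {h : ℝ | ∃ o : Option ℝ, IsTypeALine Φ o ∧
          ∃ n : ℕ, ∃ P : MvPolynomial (Fin 2) ℝ,
            Φ = lineForm o ^ n * P ∧ pev P (basePt o) ≠ 0 ∧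
            h = max ((m : ℝ) / 2) (n : ℝ)}
        (heightPhi Φ m)) := by
  have hΦ0 : Φ ≠ 0 := by
    rintro rfl
    apply hH
    simp [Hpoly]
  have hSne : {n : ℕ | ∃ x : ℝ × ℝ, x.1 ^ 2 + x.2 ^ 2 = 1 ∧ orddAt Φ x = n}.Nonempty :=
    ⟨orddAt Φ (1, 0), (1, 0), by norm_num, rfl⟩
  have hSbdd : ∀ n ∈ {n : ℕ | ∃ x : ℝ × ℝ, x.1 ^ 2 + x.2 ^ 2 = 1 ∧ orddAt Φ x = n}, n ≤ m := by
    rintro n ⟨x, hxc, rfl⟩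
    obtain ⟨o, k, Q, -, -, -, hkm, -, hord⟩ :=
      Aux.point_data hΦ0 hhom (Aux.circle_ne_zero hxc)
    omega
  have hbdd : BddAbove {n : ℕ | ∃ x : ℝ × ℝ, x.1 ^ 2 + x.2 ^ 2 = 1 ∧ orddAt Φ x = n} :=
    ⟨m, fun n hn => hSbdd n hn⟩
  have hordd : ordd Φ = sSup {n : ℕ | ∃ x : ℝ × ℝ, x.1 ^ 2 + x.2 ^ 2 = 1 ∧ orddAt Φ x = n} := rfl
  have hbig : ∀ n ∈ {n : ℕ | ∃ x : ℝ × ℝ, x.1 ^ 2 + x.2 ^ 2 = 1 ∧ orddAt Φ x = n}, 2 ≤ n →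
      ∃ o : Option ℝ, IsTypeALine Φ o ∧
        ∃ Q : MvPolynomial (Fin 2) ℝ, Φ = lineForm o ^ n * Q ∧ pev Q (basePt o) ≠ 0 := by
    rintro n ⟨x, hxc, rfl⟩ h2
    obtain ⟨o, k, Q, hxo, hfac, hnd, hkm, hQh, hord⟩ :=
      Aux.point_data hΦ0 hhom (Aux.circle_ne_zero hxc)
    have hfac' : Φ = lineForm o ^ (k - 2 + 2) * Q := by
      rw [show k - 2 + 2 = k by omega]
      exact hfac
    refine ⟨o, Aux.typeA_of_factor hfac', Q, by rw [hord]; exact hfac,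
      Aux.pev_ne_zero_on_line hQh hnd (Aux.basePt_mem o) (Aux.basePt_ne_zero o)⟩
  constructor
  · intro hno
    have h1 : ∀ n ∈ {n : ℕ | ∃ x : ℝ × ℝ, x.1 ^ 2 + x.2 ^ 2 = 1 ∧ orddAt Φ x = n}, n ≤ 1 := by
      intro n hn
      by_contra hgt
      obtain ⟨o, hA, -⟩ := hbig n hn (by omega)
      exact hno ⟨o, hA⟩
    have h2 : ordd Φ ≤ 1 := by rw [hordd]; exact csSup_le' h1
    have h3 : (ordd Φ : ℝ) ≤ 1 := by exact_mod_cast h2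
    have hm2 : (1 : ℝ) ≤ (m : ℝ) / 2 := by
      have : (2 : ℝ) ≤ (m : ℝ) := by exact_mod_cast hm
      linarith
    unfold heightPhi
    rw [max_eq_left (by linarith)]
  · rintro ⟨o₀, hA₀⟩
    constructor
    · by_cases hc : 2 * ordd Φ ≤ m
      · obtain ⟨k, Q, hfac, hnd⟩ := Aux.exists_max_factor o₀ hΦ0
        have hQ0 : Q ≠ 0 := by rintro rfl; rw [mul_zero] at hfac; exact hΦ0 hfac
        obtain ⟨e, hme, hQh⟩ :=
          Aux.isHomog_of_lineForm_pow_mul k (by rw [← hfac]; exact hhom) hQ0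
        have hQb : pev Q (basePt o₀) ≠ 0 :=
          Aux.pev_ne_zero_on_line hQh hnd (Aux.basePt_mem o₀) (Aux.basePt_ne_zero o₀)
        refine ⟨o₀, hA₀, k, Q, hfac, hQb, ?_⟩
        have hQn : pev Q (Aux.normPt o₀) ≠ 0 :=
          Aux.pev_ne_zero_on_line hQh hnd (Aux.normPt_mem o₀) (Aux.normPt_ne_zero o₀)
        have hkord : orddAt Φ (Aux.normPt o₀) = k :=
          Aux.orddAt_eq hfac (Aux.normPt_mem o₀) (Aux.normPt_ne_zero o₀) hQn
        have hkN : k ≤ ordd Φ := by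
          rw [hordd]
          exact le_csSup hbdd ⟨Aux.normPt o₀, Aux.normPt_circ o₀, hkord⟩
        have hr1 : (ordd Φ : ℝ) ≤ (m : ℝ) / 2 := by
          have h2c : ((2 * ordd Φ : ℕ) : ℝ) ≤ (m : ℝ) := by exact_mod_cast hc
          push_cast at h2c
          linarith
        have hr2 : (k : ℝ) ≤ (m : ℝ) / 2 := le_trans (by exact_mod_cast hkN) hr1
        unfold heightPhi
        rw [max_eq_left hr1, max_eq_left hr2]
      · push_neg at hc
        have hN2 : 2 ≤ ordd Φ := by omega
        have hmem := Nat.sSup_mem hSne hbdd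
        rw [← hordd] at hmem
        obtain ⟨o, hA, Q, hfac, hQb⟩ := hbig _ hmem hN2
        exact ⟨o, hA, ordd Φ, Q, hfac, hQb, rfl⟩
    · rintro h ⟨o, hA, n, P, hfac, hPb, rfl⟩
      have hP0 : P ≠ 0 := fun h0 => hPb (by rw [h0]; simp [pev])
      have hnd : ¬ lineForm o ∣ P := by
        rintro ⟨R, hR⟩
        apply hPb
        rw [hR, Aux.pev_mul, Aux.pev_lineForm_eq_zero (Aux.basePt_mem o), zero_mul]
      obtain ⟨e, hme, hPh⟩ :=
        Aux.isHomog_of_lineForm_pow_mul n (by rw [← hfac]; exact hhom) hP0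
      have hPn : pev P (Aux.normPt o) ≠ 0 :=
        Aux.pev_ne_zero_on_line hPh hnd (Aux.normPt_mem o) (Aux.normPt_ne_zero o)
      have hordn : orddAt Φ (Aux.normPt o) = n :=
        Aux.orddAt_eq hfac (Aux.normPt_mem o) (Aux.normPt_ne_zero o) hPn
      have hnN : n ≤ ordd Φ := by
        rw [hordd]
        exact le_csSup hbdd ⟨Aux.normPt o, Aux.normPt_circ o, hordn⟩
      unfold heightPhi
      exact max_le_max le_rfl (by exact_mod_cast hnN)
end

section
/- If λ ∈ ℝ is such that Γ(λ) is of Type B, then ω_λ + 2 ≤ m; that is, M^λ ≤ m. -/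
open MeasureTheory
open scoped ENNReal

open Paper

section Aux

open Polynomial in
lemma auxDvd {k : ℕ} {u v : Polynomial ℝ} (h : X ^ k ∣ u * v) (hv : v.eval 0 ≠ 0) :
    X ^ k ∣ u := by
  rcases eq_or_ne u 0 with rfl | hu
  · simp
  have hv0 : v ≠ 0 := fun h0 => hv (by simp [h0])
  have huv : u * v ≠ 0 := mul_ne_zero hu hv0
  have h1 : k ≤ rootMultiplicity 0 (u * v) := by
    rw [le_rootMultiplicity_iff huv]
    simpa using h
  have h2 : rootMultiplicity 0 v = 0 :=
    rootMultiplicity_eq_zero (by simpa [IsRoot] using hv)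
  rw [rootMultiplicity_mul huv, h2, add_zero] at h1
  have := (le_rootMultiplicity_iff hu).mp h1
  simpa using this

open Polynomial in
lemma auxStep {k : ℕ} (hk : k ≠ 0) {w : Polynomial ℝ} (hw : X ^ k ∣ w)
    (hw' : X ^ k ∣ derivative w) : X ^ (k + 1) ∣ w := by
  obtain ⟨j, rfl⟩ : ∃ j, k = j + 1 := ⟨k - 1, by omega⟩
  rw [X_pow_dvd_iff] at hw hw' ⊢
  intro d hd
  by_cases hdj : d < j + 1
  · exact hw d hdj
  · have hd' : d = j + 1 := by omega
    subst hd'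
    have h0 := hw' j (by omega)
    rw [coeff_derivative] at h0
    rcases mul_eq_zero.mp h0 with h1 | h1
    · exact h1
    · exfalso; revert h1; positivity

open Polynomial in
lemma keyUniv (n : ℕ) (f : Polynomial ℝ) (hdeg : f.natDegree ≤ n + 2) (hf0 : f.eval 0 ≠ 0)
    (hdvd : X ^ (n + 1) ∣
      (C ((n : ℝ) + 2) * (f * derivative (derivative f)) - C ((n : ℝ) + 1) * derivative f ^ 2)) :
    C ((n : ℝ) + 2) * (f * derivative (derivative f)) - C ((n : ℝ) + 1) * derivative f ^ 2 = 0 := by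
  set c0 : ℝ := f.eval 0 with hc0
  set c1 : ℝ := (derivative f).eval 0 with hc1
  have hm0 : ((n : ℝ) + 2) ≠ 0 := by positivity
  set a : ℝ := c1 / (((n : ℝ) + 2) * c0) with ha
  set G : Polynomial ℝ := C c0 * (1 + C a * X) ^ (n + 2) with hG
  set G1 : Polynomial ℝ := C (c0 * (((n : ℝ) + 2) * a)) * (1 + C a * X) ^ (n + 1) with hG1
  set G2 : Polynomial ℝ :=
    C (c0 * (((n : ℝ) + 2) * (((n : ℝ) + 1) * a ^ 2))) * (1 + C a * X) ^ n with hG2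
  have hone : derivative (1 + C a * X) = C a := by
    simp
  have hdG : derivative G = G1 := by
    rw [hG, hG1, derivative_C_mul, derivative_pow, hone,
      show n + 2 - 1 = n + 1 from rfl]
    simp only [map_mul, map_add, map_pow, map_one, map_natCast, map_ofNat]
    push_cast
    ring
  have hdG1 : derivative G1 = G2 := by
    rw [hG1, hG2, derivative_C_mul, derivative_pow, hone,
      show n + 1 - 1 = n from rfl]
    simp only [map_mul, map_add, map_pow, map_one, map_natCast, map_ofNat]
    push_cast
    ring
  have hB : C ((n : ℝ) + 2) * G * G2 = C ((n : ℝ) + 1) * G1 ^ 2 := by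
    rw [hG, hG1, hG2]
    simp only [map_mul, map_add, map_pow, map_one, map_natCast, map_ofNat]
    ring
  set g : Polynomial ℝ :=
    C ((n : ℝ) + 2) * (f * derivative (derivative f)) - C ((n : ℝ) + 1) * derivative f ^ 2
    with hg
  set W : Polynomial ℝ := derivative f * G - f * G1 with hW
  have hdW : derivative W = derivative (derivative f) * G - f * G2 := by
    rw [hW]
    simp only [derivative_sub, derivative_mul, hdG, hdG1]
    ring
  have Iden : C ((n : ℝ) + 2) * (f * G) * derivative W
      = C ((n : ℝ) + 1) * (derivative f * G + f * G1) * W + g * G ^ 2 := by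
    rw [hdW, hg, hW]
    linear_combination (-(f ^ 2)) * hB
  have hG0 : G.eval 0 = c0 := by simp [hG]
  have hG10 : G1.eval 0 = c1 := by
    simp [hG1, ha]
    field_simp
  have hWdvd : ∀ k, k ≤ n + 2 → X ^ k ∣ W := by
    intro k
    induction k with
    | zero => intro _; simp
    | succ j ih =>
      intro hj
      rcases Nat.eq_zero_or_pos j with rfl | hj0
      · rw [pow_one, X_dvd_iff, coeff_zero_eq_eval_zero]
        simp [hW, hG0, hG10]
        ring
      · have hWj : X ^ j ∣ W := ih (by omega)
        have hrhs : X ^ j ∣ C ((n : ℝ) + 1) * (derivative f * G + f * G1) * W + g * G ^ 2 := by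
          refine dvd_add (Dvd.dvd.mul_left hWj _) ?_
          exact Dvd.dvd.mul_right (dvd_trans (pow_dvd_pow X (by omega)) hdvd) _
        rw [← Iden] at hrhs
        have hdW' : X ^ j ∣ derivative W := by
          refine auxDvd (v := C ((n : ℝ) + 2) * (f * G)) ?_ ?_
          · rwa [mul_comm] at hrhs
          · simp only [eval_mul, eval_C, hG0]
            exact mul_ne_zero hm0 (mul_ne_zero hf0 hf0)
        exact auxStep (by omega) hWj hdW'
  set E : Polynomial ℝ := f - G with hE
  have hWE : W = derivative E * G - E * G1 := by
    rw [hE, hW]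
    simp only [derivative_sub, hdG]
    ring
  have hEdvd : ∀ k, k ≤ n + 3 → X ^ k ∣ E := by
    intro k
    induction k with
    | zero => intro _; simp
    | succ j ih =>
      intro hj
      rcases Nat.eq_zero_or_pos j with rfl | hj0
      · rw [pow_one, X_dvd_iff, coeff_zero_eq_eval_zero]
        simp [hE, hG0]
        exact sub_eq_zero.mpr hc0.symm
      · have hEj : X ^ j ∣ E := ih (by omega)
        have h1 : X ^ j ∣ derivative E * G := by
          have : derivative E * G = W + E * G1 := by rw [hWE]; ring
          rw [this]
          exact dvd_add (hWdvd j (by omega)) (Dvd.dvd.mul_right hEj _)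
        have h2 : X ^ j ∣ derivative E := auxDvd h1 (by rw [hG0]; exact hf0)
        exact auxStep (by omega) hEj h2
  have hE0 : E = 0 := by
    by_contra hne
    have h1 : X ^ (n + 3) ∣ E := hEdvd (n + 3) le_rfl
    have h2 := Polynomial.natDegree_le_of_dvd h1 hne
    rw [natDegree_X_pow] at h2
    have h3 : E.natDegree ≤ n + 2 := by
      refine le_trans (natDegree_sub_le _ _) (max_le hdeg ?_)
      rw [hG]
      refine le_trans (natDegree_mul_le) ?_
      simp only [natDegree_C, zero_add]
      refine le_trans (natDegree_pow_le) ?_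
      have h4 : (C a * X).natDegree ≤ 1 := le_trans natDegree_mul_le (by simp)
      have : (1 + C a * X).natDegree ≤ 1 :=
        le_trans (natDegree_add_le _ _) (max_le (by simp) h4)
      calc (n + 2) * (1 + C a * X).natDegree ≤ (n + 2) * 1 := by
            exact Nat.mul_le_mul_left _ this
        _ = n + 2 := by ring
    omega
  have hfG : f = G := by rw [← sub_eq_zero]; exact hE0
  rw [hg, hfG, hdG, hdG1]
  linear_combination hB

open MvPolynomial in
lemma pderivComm (i j : Fin 2) (p : MvPolynomial (Fin 2) ℝ) :
    pderiv i (pderiv j p) = pderiv j (pderiv i p) := by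
  rcases eq_or_ne i j with rfl | hij
  · rfl
  · induction p using MvPolynomial.induction_on' with
    | add p q hp hq => simp only [map_add, hp, hq]
    | monomial d c =>
      simp only [pderiv_monomial]
      have e1 : (d - Finsupp.single j 1 : Fin 2 →₀ ℕ) i = d i := by
        rw [Finsupp.tsub_apply, Finsupp.single_apply]
        simp [hij.symm]
      have e2 : (d - Finsupp.single i 1 : Fin 2 →₀ ℕ) j = d j := by
        rw [Finsupp.tsub_apply, Finsupp.single_apply]
        simp [hij]
      have e3 : d - Finsupp.single j 1 - Finsupp.single i 1
          = d - Finsupp.single i 1 - Finsupp.single j 1 := by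
        ext k
        rw [Finsupp.tsub_apply, Finsupp.tsub_apply, Finsupp.tsub_apply, Finsupp.tsub_apply]
        omega
      rw [e1, e2, e3]
      ring_nf

open MvPolynomial in
lemma eulerId (n : ℕ) (p : MvPolynomial (Fin 2) ℝ) (hp : p.IsHomogeneous n) :
    X 0 * pderiv 0 p + X 1 * pderiv 1 p = (n : MvPolynomial (Fin 2) ℝ) * p := by
  have key : ∀ d ∈ p.support,
      X 0 * pderiv 0 (monomial d (coeff d p)) + X 1 * pderiv 1 (monomial d (coeff d p))
        = (n : MvPolynomial (Fin 2) ℝ) * monomial d (coeff d p) := by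
    intro d hd
    have hdeg : d 0 + d 1 = n := by
      have h1 : Finsupp.weight 1 d = n := hp (MvPolynomial.mem_support_iff.mp hd)
      change Finsupp.weight (fun _ => 1) d = n at h1
      rw [← Finsupp.degree_eq_weight_one] at h1
      rw [← h1, Finsupp.degree_eq_sum, Fin.sum_univ_two]
    have hx : ∀ i : Fin 2, X i * pderiv i (monomial d (coeff d p))
        = monomial d (coeff d p * (d i : ℝ)) := by
      intro i
      rw [pderiv_monomial, X, monomial_mul, one_mul]
      rcases Nat.eq_zero_or_pos (d i) with h0 | h0
      · simp [h0]
      · have he : d - Finsupp.single i 1 + Finsupp.single i 1 = d := by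
          ext k
          rw [Finsupp.add_apply, Finsupp.tsub_apply]
          rcases eq_or_ne i k with rfl | hik
          · simp only [Finsupp.single_eq_same]
            omega
          · simp [Finsupp.single_apply, hik]
        rw [add_comm] at he
        rw [he]
    rw [hx 0, hx 1, ← map_add, ← mul_add, ← Nat.cast_add, hdeg,
      show ((n : MvPolynomial (Fin 2) ℝ)) = C ((n : ℝ)) from (map_natCast C n).symm,
      C_mul_monomial]
    congr 1
    ring
  conv_lhs => rw [p.as_sum]
  conv_rhs => rw [p.as_sum]
  rw [Finset.mul_sum]
  simp only [map_sum, Finset.mul_sum, ← Finset.sum_add_distrib]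
  exact Finset.sum_congr rfl key

open MvPolynomial in
lemma eulerD (n : ℕ) (p : MvPolynomial (Fin 2) ℝ) (hp : p.IsHomogeneous n) (i : Fin 2) :
    X 0 * pderiv 0 (pderiv i p) + X 1 * pderiv 1 (pderiv i p) + pderiv i p
      = (n : MvPolynomial (Fin 2) ℝ) * pderiv i p := by
  have h := congrArg (pderiv i) (eulerId n p hp)
  rw [show ((n : MvPolynomial (Fin 2) ℝ)) = C ((n : ℝ)) from (map_natCast C n).symm] at h
  simp only [map_add, pderiv_mul, pderiv_X, pderiv_C, zero_mul, zero_add] at h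
  rw [show ((n : MvPolynomial (Fin 2) ℝ)) = C ((n : ℝ)) from (map_natCast C n).symm]
  have hc : pderiv 1 (pderiv 0 p) = pderiv 0 (pderiv 1 p) := pderivComm 1 0 p
  fin_cases i <;> simp_all [hc] <;> linear_combination h

noncomputable def phiSub (lam : ℝ) : MvPolynomial (Fin 2) ℝ →ₐ[ℝ] Polynomial ℝ :=
  MvPolynomial.aeval ![(1 : Polynomial ℝ), Polynomial.C lam + Polynomial.X]

open MvPolynomial in
lemma phiSubPderiv (lam : ℝ) (p : MvPolynomial (Fin 2) ℝ) :
    phiSub lam (pderiv 1 p) = Polynomial.derivative (phiSub lam p) := by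
  induction p using MvPolynomial.induction_on with
  | C a => simp [phiSub]
  | add p q hp hq => simp [map_add, hp, hq]
  | mul_X p i hp =>
    rw [pderiv_mul, map_add, map_mul, map_mul, hp, map_mul, Polynomial.derivative_mul]
    congr 1
    fin_cases i <;> simp [phiSub, pderiv_X]

open MvPolynomial in
lemma phiSubEval0 (lam : ℝ) (p : MvPolynomial (Fin 2) ℝ) :
    (phiSub lam p).eval 0 = MvPolynomial.eval ![1, lam] p := by
  induction p using MvPolynomial.induction_on with
  | C a => simp [phiSub]
  | add p q hp hq => simp [map_add, hp, hq]
  | mul_X p i hp =>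
    rw [map_mul, Polynomial.eval_mul, hp, map_mul]
    congr 1
    fin_cases i <;> simp [phiSub]

open MvPolynomial in
lemma phiSubDeg (lam : ℝ) (m : ℕ) (p : MvPolynomial (Fin 2) ℝ) (hp : p.IsHomogeneous m) :
    (phiSub lam p).natDegree ≤ m := by
  rw [phiSub, p.as_sum, map_sum]
  refine Polynomial.natDegree_sum_le_of_forall_le _ _ ?_
  intro d hd
  rw [aeval_monomial]
  refine le_trans Polynomial.natDegree_mul_le ?_
  have h0 : (algebraMap ℝ (Polynomial ℝ) (coeff d p)).natDegree = 0 := by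
    simp [Polynomial.natDegree_C]
  rw [h0, zero_add]
  have hdeg : d 0 + d 1 = m := by
    have h1 : Finsupp.weight 1 d = m := hp (MvPolynomial.mem_support_iff.mp hd)
    change Finsupp.weight (fun _ => 1) d = m at h1
    rw [← Finsupp.degree_eq_weight_one] at h1
    rw [← h1, Finsupp.degree_eq_sum, Fin.sum_univ_two]
  refine le_trans (Polynomial.natDegree_prod_le _ _) ?_
  calc ∑ i ∈ d.support, (![(1 : Polynomial ℝ), Polynomial.C lam + Polynomial.X] i ^ d i).natDegree
      ≤ ∑ i ∈ d.support, d i := by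
        refine Finset.sum_le_sum ?_
        intro i _
        refine le_trans (Polynomial.natDegree_pow_le) ?_
        have : (![(1 : Polynomial ℝ), Polynomial.C lam + Polynomial.X] i).natDegree ≤ 1 := by
          fin_cases i
          · simp
          · exact le_trans (Polynomial.natDegree_add_le _ _) (by simp)
        calc d i * (![(1 : Polynomial ℝ), Polynomial.C lam + Polynomial.X] i).natDegree
            ≤ d i * 1 := Nat.mul_le_mul_left _ this
          _ = d i := by ring
    _ ≤ m := by
        rw [← hdeg, Finset.sum_subset (Finset.subset_univ d.support)
          (fun x _ hx => Finsupp.notMem_support_iff.mp hx), Fin.sum_univ_two]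

end Aux


/-- Remark 1.10 / inequality (4.14): for a Type B line,
`M^λ = ω_λ + 2 ≤ m`. -/
theorem typeB_M_le_m
    (Φ : MvPolynomial (Fin 2) ℝ) (m : ℕ) (hm : 2 ≤ m)
    (hhom : Φ.IsHomogeneous m) (hH : Hpoly Φ ≠ 0)
    (lam : ℝ) (hB : TypeB Φ lam)
    (ω : ℕ) (Q : MvPolynomial (Fin 2) ℝ)
    (hfac : Hpoly Φ = linForm lam ^ ω * Q)
    (hQ : MvPolynomial.eval ![1, lam] Q ≠ 0) :
    ω + 2 ≤ m := by
  obtain ⟨n, rfl⟩ : ∃ n, m = n + 2 := ⟨m - 2, by omega⟩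
  by_contra hcon
  have hω : n + 1 ≤ ω := by omega
  have e1 := eulerId (n + 2) Φ hhom
  have e2 := eulerD (n + 2) Φ hhom 0
  have e3 := eulerD (n + 2) Φ hhom 1
  rw [pderivComm 1 0 Φ] at e2
  push_cast at e1 e2 e3
  have star : MvPolynomial.X 0 ^ 2 * Hpoly Φ
      = ((n : MvPolynomial (Fin 2) ℝ) + 1) *
        (((n : MvPolynomial (Fin 2) ℝ) + 2) *
            (Φ * MvPolynomial.pderiv 1 (MvPolynomial.pderiv 1 Φ))
          - ((n : MvPolynomial (Fin 2) ℝ) + 1) * (MvPolynomial.pderiv 1 Φ) ^ 2) := by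
    rw [Hpoly]
    linear_combination
      (MvPolynomial.X 0 * MvPolynomial.pderiv 1 (MvPolynomial.pderiv 1 Φ)) * e2
      + (((n : MvPolynomial (Fin 2) ℝ) + 1) * MvPolynomial.pderiv 1 (MvPolynomial.pderiv 1 Φ)) * e1
      - (MvPolynomial.X 0 * MvPolynomial.pderiv 0 (MvPolynomial.pderiv 1 Φ)
          + ((n : MvPolynomial (Fin 2) ℝ) + 1) * MvPolynomial.pderiv 1 Φ) * e3
  have hφ := congrArg (phiSub lam) star
  have hX0 : phiSub lam (MvPolynomial.X 0) = 1 := by simp [phiSub]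
  simp only [map_mul, map_sub, map_add, map_pow, map_natCast, map_one, map_ofNat, hX0,
    one_pow, one_mul, phiSubPderiv] at hφ
  set F : Polynomial ℝ := phiSub lam Φ with hF
  have hC1 : Polynomial.C ((n : ℝ) + 1) = ((n : Polynomial ℝ) + 1) := by
    rw [map_add, Polynomial.C_1, Polynomial.C_eq_natCast]
  have hC2 : Polynomial.C ((n : ℝ) + 2) = ((n : Polynomial ℝ) + 2) := by
    push_cast
    rw [map_add, Polynomial.C_eq_natCast, map_ofNat]
  -- factorization side
  have hfac' := congrArg (phiSub lam) hfac
  have hlin : phiSub lam (linForm lam) = Polynomial.X := by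
    simp [phiSub, linForm]
  rw [map_mul, map_pow, hlin] at hfac'
  set q : Polynomial ℝ := phiSub lam Q with hq
  have hq0 : q.eval 0 ≠ 0 := by
    rw [hq, phiSubEval0]
    exact hQ
  have hF0 : F.eval 0 ≠ 0 := by
    rw [hF, phiSubEval0]
    exact hB.2
  have hFdeg : F.natDegree ≤ n + 2 := phiSubDeg lam (n + 2) Φ hhom
  set g : Polynomial ℝ :=
    Polynomial.C ((n : ℝ) + 2) * (F * Polynomial.derivative (Polynomial.derivative F))
      - Polynomial.C ((n : ℝ) + 1) * Polynomial.derivative F ^ 2 with hgdef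
  have hkey : Polynomial.X ^ ω * q = Polynomial.C ((n : ℝ) + 1) * g := by
    rw [← hfac', hφ, hgdef, hC1, hC2]
  have hn1 : ((n : ℝ) + 1) ≠ 0 := by positivity
  have hdvdg : Polynomial.X ^ (n + 1) ∣ g := by
    have h1 : Polynomial.X ^ (n + 1) ∣ Polynomial.C ((n : ℝ) + 1) * g := by
      rw [← hkey]
      exact Dvd.dvd.mul_right (pow_dvd_pow _ hω) q
    have h2 : g = Polynomial.C (((n : ℝ) + 1)⁻¹) * (Polynomial.C ((n : ℝ) + 1) * g) := by
      rw [← mul_assoc, ← map_mul, inv_mul_cancel₀ hn1, Polynomial.C_1, one_mul]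
    rw [h2]
    exact Dvd.dvd.mul_left h1 _
  have hg0 : g = 0 := keyUniv n F hFdeg hF0 (hgdef ▸ hdvdg)
  have hzero : Polynomial.X ^ ω * q = 0 := by rw [hkey, hg0, mul_zero]
  have hqne : q ≠ 0 := fun h => hq0 (by simp [h])
  exact (mul_ne_zero (pow_ne_zero _ Polynomial.X_ne_zero) hqne) hzero
end
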